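/- Correctness of the protocol (composite statement): for every database A = (a^1,…,a^ℓ) ∈ Σ^ℓ and every index i ∈ Fin ℓ, the composition F · C · U · Z_i applied (by matrix-vector multiplication) to the initial state Φ_A equals the standard basis vector at (a^i, 0, 0), where Z_i is the diagonal matrix with entries (-1)^{(q(i)).val} on the diagonal, U has entries U((x,z,q),(x',z',q')) = 1 iff x = x', z = z' and q(k) = q'(k) + x·a^k for all k, C has entries C((x,z,q),(x',z',q')) = 1 iff x = x', z = z' + x and q = q', and F has entries F((x,z,q),(x',z',q')) = 2^{-r/2} · (-1)^{(x·x').val} if z = z' and q = q' and 0 otherwise. In particular, the user who measures register R in the computational basis obtains the item a^i with probability 1. -/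

import Mathlib

open scoped BigOperators
open Matrix

/-- The item set `Σ = {0,1}^r`, identified with functions `Fin r → ZMod 2`. -/
abbrev Sig (r : ℕ) := Fin r → ZMod 2

/-- The full register space `(R, R', Q_1, …, Q_ℓ)`. -/
abbrev Reg (r ℓ : ℕ) := Sig r × Sig r × (Fin ℓ → ZMod 2)

/-- Dot product `u · v = ∑ k, u k * v k` in `ZMod 2`. -/
def dot {r : ℕ} (u v : Sig r) : ZMod 2 := ∑ k, u k * v k

/-- The amplitude `2^{-r/2}` as a complex number. -/
noncomputable def amp (r : ℕ) : ℂ := ((Real.sqrt (2 ^ r) : ℝ) : ℂ)⁻¹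

/-- The state `Φ_A` prepared by the server at Step 1. -/
noncomputable def PhiA (r ℓ : ℕ) (A : Fin ℓ → Sig r) : Reg r ℓ → ℂ := fun p =>
  if p.2.1 = p.1 ∧ ∀ k : Fin ℓ, p.2.2 k = dot p.1 (A k) then amp r else 0

/-- The Pauli `Z` gate applied to register `Q_i` (Step 2). -/
noncomputable def Zgate (r ℓ : ℕ) (i : Fin ℓ) : Matrix (Reg r ℓ) (Reg r ℓ) ℂ :=
  fun p p' => if p = p' then (-1 : ℂ) ^ (p.2.2 i).val else 0

/-- The server's Step-3 operation: `U_{a^k}` applied to `(R, Q_k)` for each `k`. -/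
noncomputable def Ugate (r ℓ : ℕ) (A : Fin ℓ → Sig r) :
    Matrix (Reg r ℓ) (Reg r ℓ) ℂ := fun p p' =>
  if p.1 = p'.1 ∧ p.2.1 = p'.2.1 ∧
      ∀ k : Fin ℓ, p.2.2 k = p'.2.2 k + dot p.1 (A k)
  then 1 else 0

/-- The CNOT gate from register `R` to register `R'` (Step 4, first part). -/
noncomputable def Cgate (r ℓ : ℕ) : Matrix (Reg r ℓ) (Reg r ℓ) ℂ := fun p p' =>
  if p.1 = p'.1 ∧ p.2.1 = p'.2.1 + p.1 ∧ p.2.2 = p'.2.2 then 1 else 0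

/-- The QFT applied to register `R` (Step 4, second part). -/
noncomputable def Fgate (r ℓ : ℕ) : Matrix (Reg r ℓ) (Reg r ℓ) ℂ := fun p p' =>
  if p.2.1 = p'.2.1 ∧ p.2.2 = p'.2.2
  then amp r * (-1 : ℂ) ^ (dot p.1 p'.1).val else 0


section AuxPIR

open scoped BigOperators
open Matrix

lemma zmod2_sumf (f : ZMod 2 → ℂ) : ∑ x : ZMod 2, f x = f 0 + f 1 := by
  rw [show (Finset.univ : Finset (ZMod 2)) = {0, 1} from rfl]
  simp [Finset.sum_insert]

lemma sign_addZ (a b : ZMod 2) : (-1:ℂ)^((a+b).val) = (-1)^a.val * (-1)^b.val := by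
  rcases (show ∀ c : ZMod 2, c = 0 ∨ c = 1 by decide) a with rfl | rfl <;>
  rcases (show ∀ c : ZMod 2, c = 0 ∨ c = 1 by decide) b with rfl | rfl <;>
    simp [show ((1:ZMod 2)+1) = 0 from rfl, show ZMod.val (1 : ZMod 2) = 1 from rfl]

lemma sign_sumZ {ι : Type*} (s : Finset ι) (f : ι → ZMod 2) :
    (-1:ℂ)^((∑ k ∈ s, f k).val) = ∏ k ∈ s, (-1:ℂ)^(f k).val := by
  classical
  induction s using Finset.induction with
  | empty => simp
  | insert _ _ h ih => rw [Finset.sum_insert h, Finset.prod_insert h, sign_addZ, ih]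

lemma sum_signZ {r : ℕ} (u : Sig r) :
    ∑ x : Sig r, (-1:ℂ)^((dot u x).val) = if u = 0 then (2:ℂ)^r else 0 := by
  classical
  have h1 : ∀ x : Sig r, (-1:ℂ)^((dot u x).val) = ∏ k, (-1:ℂ)^((u k * x k).val) :=
    fun x => sign_sumZ _ _
  simp only [h1]
  rw [← Fintype.prod_sum (fun (k : Fin r) (v : ZMod 2) => (-1:ℂ)^((u k * v).val))]
  have h2 : ∀ k : Fin r, (∑ v : ZMod 2, (-1:ℂ)^((u k * v).val)) =
      if u k = 0 then 2 else 0 := by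
    intro k
    have h : u k = 0 ∨ u k = 1 := by
      generalize u k = a; revert a; decide
    rcases h with h | h <;> rw [h] <;> rw [zmod2_sumf] <;>
      norm_num [show ZMod.val (1 : ZMod 2) = 1 from rfl]
  simp only [h2]
  by_cases hu : u = 0
  · simp [hu]
  · obtain ⟨k, hk⟩ := Function.ne_iff.1 hu
    rw [if_neg hu]
    exact Finset.prod_eq_zero (Finset.mem_univ k) (by simpa using hk)

lemma dot_add_leftZ {r : ℕ} (u v w : Sig r) : dot (u + v) w = dot u w + dot v w := by
  simp only [dot, Pi.add_apply, add_mul]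
  exact Finset.sum_add_distrib

lemma dot_commZ {r : ℕ} (u v : Sig r) : dot u v = dot v u := by
  simp only [dot, mul_comm]

lemma amp_sqZ (r : ℕ) : amp r * amp r * (2:ℂ)^r = 1 := by
  have h0 : (0:ℝ) ≤ 2 ^ r := by positivity
  have h : (Real.sqrt (2^r)) * (Real.sqrt (2^r)) = 2^r := Real.mul_self_sqrt h0
  simp only [amp, ← mul_inv]
  rw [← Complex.ofReal_mul, h]
  push_cast
  rw [inv_mul_cancel₀ (pow_ne_zero _ two_ne_zero)]

lemma zmod2_cancel (a b : ZMod 2) : a + b + b = a := by revert a b; decide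

lemma zmod2_add_right (a b : ZMod 2) : a + b = b ↔ a = 0 := by revert a b; decide

lemma sig_add_eq_zero {r : ℕ} (u v : Sig r) : u + v = 0 ↔ u = v := by
  have hz : ∀ a b : ZMod 2, a + b = 0 ↔ a = b := by decide
  constructor
  · intro h; funext k
    exact (hz _ _).1 (congrFun h k)
  · intro h; subst h; funext k
    simpa using (hz (u k) (u k)).2 rfl

lemma stepZ (r ℓ : ℕ) (A : Fin ℓ → Sig r) (i : Fin ℓ) :
    (Zgate r ℓ i).mulVec (PhiA r ℓ A) = fun p =>
      if p.2.1 = p.1 ∧ ∀ k : Fin ℓ, p.2.2 k = dot p.1 (A k)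
      then amp r * (-1:ℂ)^((dot p.1 (A i)).val) else 0 := by
  funext p
  simp only [Matrix.mulVec, dotProduct, Zgate, ite_mul, zero_mul]
  rw [Finset.sum_ite_eq]
  simp only [Finset.mem_univ, if_true, PhiA]
  by_cases h : p.2.1 = p.1 ∧ ∀ k : Fin ℓ, p.2.2 k = dot p.1 (A k)
  · rw [if_pos h, if_pos h, h.2 i]; ring
  · rw [if_neg h, if_neg h, mul_zero]

lemma stepU (r ℓ : ℕ) (A : Fin ℓ → Sig r) (i : Fin ℓ) :
    (Ugate r ℓ A).mulVec (fun p =>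
      if p.2.1 = p.1 ∧ ∀ k : Fin ℓ, p.2.2 k = dot p.1 (A k)
      then amp r * (-1:ℂ)^((dot p.1 (A i)).val) else 0) = fun p =>
      if p.2.1 = p.1 ∧ p.2.2 = 0
      then amp r * (-1:ℂ)^((dot p.1 (A i)).val) else 0 := by
  funext p
  obtain ⟨x, z, q⟩ := p
  have hU : ∀ p' : Reg r ℓ, Ugate r ℓ A (x, z, q) p' =
      if p' = (x, z, fun k => q k + dot x (A k)) then 1 else 0 := by
    intro p'
    obtain ⟨x', z', q'⟩ := p'
    simp only [Ugate, Prod.mk.injEq]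
    congr 1
    simp only [eq_iff_iff]
    constructor
    · rintro ⟨h1, h2, h3⟩
      refine ⟨h1.symm, h2.symm, funext fun k => ?_⟩
      rw [h3 k, h1, zmod2_cancel]
    · rintro ⟨h1, h2, h3⟩
      subst h1; subst h2; subst h3
      exact ⟨rfl, rfl, fun k => (zmod2_cancel _ _).symm⟩
  simp only [Matrix.mulVec, dotProduct, hU, ite_mul, one_mul, zero_mul,
    Finset.sum_ite_eq', Finset.mem_univ, if_true]
  refine if_congr (and_congr Iff.rfl ?_) rfl rfl
  constructor
  · intro h
    funext k
    have := h k
    rw [zmod2_add_right] at this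
    exact this
  · intro h k
    rw [congrFun h k]
    simp

lemma stepC (r ℓ : ℕ) (A : Fin ℓ → Sig r) (i : Fin ℓ) :
    (Cgate r ℓ).mulVec (fun p : Reg r ℓ =>
      if p.2.1 = p.1 ∧ p.2.2 = 0
      then amp r * (-1:ℂ)^((dot p.1 (A i)).val) else 0) = fun p =>
      if p.2.1 = 0 ∧ p.2.2 = 0
      then amp r * (-1:ℂ)^((dot p.1 (A i)).val) else 0 := by
  funext p
  obtain ⟨x, z, q⟩ := p
  have hC : ∀ p' : Reg r ℓ, Cgate r ℓ (x, z, q) p' =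
      if p' = (x, z + x, q) then 1 else 0 := by
    intro p'
    obtain ⟨x', z', q'⟩ := p'
    simp only [Cgate, Prod.mk.injEq]
    congr 1
    simp only [eq_iff_iff]
    constructor
    · rintro ⟨h1, h2, h3⟩
      refine ⟨h1.symm, funext fun k => ?_, h3.symm⟩
      have := congrFun h2 k
      simp only [Pi.add_apply] at this ⊢
      rw [this]
      exact (zmod2_cancel _ _).symm
    · rintro ⟨h1, h2, h3⟩
      subst h1; subst h2; subst h3
      refine ⟨rfl, funext fun k => ?_, rfl⟩
      simp only [Pi.add_apply]
      exact (zmod2_cancel _ _).symm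
  simp only [Matrix.mulVec, dotProduct, hC, ite_mul, one_mul, zero_mul,
    Finset.sum_ite_eq', Finset.mem_univ, if_true]
  refine if_congr (and_congr ?_ Iff.rfl) rfl rfl
  constructor
  · intro h
    funext k
    have := congrFun h k
    simp only [Pi.add_apply] at this
    rw [zmod2_add_right] at this
    exact this
  · intro h
    funext k
    have := congrFun h k
    simp only [Pi.zero_apply] at this
    simp [Pi.add_apply, this]

lemma stepF (r ℓ : ℕ) (A : Fin ℓ → Sig r) (i : Fin ℓ) :
    (Fgate r ℓ).mulVec (fun p : Reg r ℓ =>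
      if p.2.1 = 0 ∧ p.2.2 = 0
      then amp r * (-1:ℂ)^((dot p.1 (A i)).val) else 0) = fun p =>
      if p = (A i, 0, 0) then 1 else 0 := by
  classical
  funext p
  obtain ⟨x, z, q⟩ := p
  simp only [Matrix.mulVec, dotProduct, Fgate]
  rw [Fintype.sum_prod_type]
  have hpair : ∀ (y : Sig r × (Fin ℓ → ZMod 2)), (z = y.1 ∧ q = y.2) ↔ ((z, q) = y) := by
    intro y
    constructor
    · rintro ⟨h1, h2⟩; exact Prod.ext h1 h2
    · rintro rfl; exact ⟨rfl, rfl⟩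
  simp only [hpair, ite_mul, zero_mul, Finset.sum_ite_eq, Finset.mem_univ, if_true]
  by_cases hzq : z = 0 ∧ q = 0
  · simp only [if_pos hzq]
    have hterm : ∀ x' : Sig r,
        (amp r * (-1:ℂ)^((dot x x').val)) * (amp r * (-1:ℂ)^((dot x' (A i)).val)) =
        (amp r * amp r) * (-1:ℂ)^((dot (x + A i) x').val) := by
      intro x'
      rw [dot_add_leftZ, sign_addZ, dot_commZ x' (A i)]
      ring
    simp only [hterm, ← Finset.mul_sum, sum_signZ]
    simp only [sig_add_eq_zero]
    by_cases hx : x = A i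
    · rw [if_pos hx, if_pos (by simp [hx, hzq.1, hzq.2, Prod.ext_iff]), amp_sqZ]
    · rw [if_neg hx, if_neg (by simp [Prod.ext_iff, hx]), mul_zero]
  · simp only [if_neg hzq, mul_zero, Finset.sum_const_zero]
    rw [if_neg (by rintro h; rw [Prod.ext_iff, Prod.ext_iff] at h; exact hzq ⟨h.2.1, h.2.2⟩)]

end AuxPIR

/-- correctness of the protocol. The composition `F · C · U · Z_i`
applied to `Φ_A` is exactly the standard basis vector at `(a^i, 0, 0)`, so the user
who measures register `R` in the computational basis obtains `a^i` with probability 1. -/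
theorem stmt_7 (r ℓ : ℕ) (hr : 0 < r) (hℓ : 0 < ℓ) (A : Fin ℓ → Sig r) (i : Fin ℓ) :
    (Fgate r ℓ * Cgate r ℓ * Ugate r ℓ A * Zgate r ℓ i).mulVec (PhiA r ℓ A) =
      fun p : Reg r ℓ => if p = (A i, 0, 0) then 1 else 0 := by
  rw [← Matrix.mulVec_mulVec, ← Matrix.mulVec_mulVec, ← Matrix.mulVec_mulVec,
    stepZ r ℓ A i, stepU r ℓ A i, stepC r ℓ A i, stepF r ℓ A i]
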